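/- Let p be a prime and a, b positive integers. Then p divides the binomial coefficient C(a,k) for every k with 1 ≤ k ≤ b if and only if ν_p(a) ≥ ℓ_p(b), where ν_p(a) = max{i : p^i divides a} and ℓ_p(b) = min{i : p^i > b}. -/

import Mathlib

/-- If `p` is prime and `p ∤ u`, then `p ∤ C(p^v * u, p^v)`. -/
lemma aux_not_dvd_choose (p : ℕ) (hp : p.Prime) :
    ∀ v u : ℕ, ¬ p ∣ u → ¬ p ∣ (p ^ v * u).choose (p ^ v) := by
  haveI : Fact p.Prime := ⟨hp⟩
  intro v
  induction v with
  | zero => intro u hu; simpa using hu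
  | succ v ih =>
    intro u hu
    have hpdvd : p ∣ p ^ (v + 1) := dvd_pow_self p (Nat.succ_ne_zero v)
    have key : (p ^ (v + 1) * u).choose (p ^ (v + 1)) ≡
        ((p ^ (v + 1) * u) % p).choose ((p ^ (v + 1)) % p) *
          ((p ^ (v + 1) * u) / p).choose ((p ^ (v + 1)) / p) [MOD p] :=
      Choose.choose_modEq_choose_mod_mul_choose_div_nat
    have h1 : (p ^ (v + 1) * u) % p = 0 :=
      Nat.dvd_iff_mod_eq_zero.mp (hpdvd.mul_right u)
    have h2 : (p ^ (v + 1)) % p = 0 := Nat.dvd_iff_mod_eq_zero.mp hpdvd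
    have h3 : (p ^ (v + 1) * u) / p = p ^ v * u := by
      rw [pow_succ, mul_comm (p ^ v) p, mul_assoc, Nat.mul_div_cancel_left _ hp.pos]
    have h4 : (p ^ (v + 1)) / p = p ^ v := by
      rw [pow_succ, Nat.mul_div_cancel _ hp.pos]
    rw [h1, h2, h3, h4, Nat.choose_self, one_mul] at key
    intro hdvd
    exact ih u hu (Nat.modEq_zero_iff_dvd.mp
      (key.symm.trans (Nat.modEq_zero_iff_dvd.mpr hdvd)))

/-- James' criterion: `p` divides `C(a,k)` for all `1 ≤ k ≤ b` iff `ν_p(a) ≥ ℓ_p(b)`,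
where `ν_p` is the `p`-adic valuation and `ℓ_p(b) = min {i : p^i > b}`. -/
theorem binom_divisibility_criterion (p a b : ℕ) (hp : p.Prime) (ha : 0 < a) (hb : 0 < b) :
    (∀ k : ℕ, 1 ≤ k → k ≤ b → p ∣ a.choose k) ↔
      sInf {i : ℕ | b < p ^ i} ≤ padicValNat p a := by
  haveI : Fact p.Prime := ⟨hp⟩
  set S : Set ℕ := {i : ℕ | b < p ^ i} with hS
  have hSne : S.Nonempty := ⟨b + 1, by
    have : b < 2 ^ (b + 1) := (Nat.lt_two_pow_self (n := b)).trans (by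
      exact Nat.pow_lt_pow_succ one_lt_two)
    exact lt_of_lt_of_le this (Nat.pow_le_pow_left hp.two_le _)⟩
  have hmem : b < p ^ sInf S := Nat.sInf_mem hSne
  constructor
  · -- forward: contrapositive
    intro hdvd
    by_contra hlt
    push_neg at hlt
    set v := padicValNat p a with hv
    have hvS : v ∉ S := fun h => absurd (Nat.sInf_le h) (by omega)
    have hpvb : p ^ v ≤ b := by simpa [hS] using hvS
    have hproj : p ^ v ∣ a := by
      rw [hv]; exact pow_padicValNat_dvd
    set u := a / p ^ v with hu
    have hau : a = p ^ v * u := (Nat.mul_div_cancel' hproj).symm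
    have hpu : ¬ p ∣ u := by
      intro hpu
      have hd : p ^ (v + 1) ∣ a := by
        rw [hau, pow_succ]
        exact mul_dvd_mul_left (p ^ v) hpu
      exact absurd hd (pow_succ_padicValNat_not_dvd ha.ne')
    have := hdvd (p ^ v) (Nat.one_le_iff_ne_zero.mpr (pow_ne_zero v hp.pos.ne')) hpvb
    rw [hau] at this
    exact aux_not_dvd_choose p hp v u hpu this
  · -- backward
    intro hle k hk1 hkb
    by_cases hka : k ≤ a
    · -- use a * C(a-1, k-1) = C(a,k) * k
      have hid : a * (a - 1).choose (k - 1) = a.choose k * k := by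
        have h := Nat.add_one_mul_choose_eq (a - 1) (k - 1)
        simp only [Nat.succ_eq_add_one, Nat.sub_add_cancel hk1, Nat.sub_add_cancel ha] at h
        exact h
      have hchoosepos : 0 < (a - 1).choose (k - 1) :=
        Nat.choose_pos (by omega)
      have hchoosepos2 : 0 < a.choose k := Nat.choose_pos hka
      have hval : padicValNat p a + padicValNat p ((a - 1).choose (k - 1)) =
          padicValNat p (a.choose k) + padicValNat p k := by
        rw [← padicValNat.mul ha.ne' hchoosepos.ne', ← padicValNat.mul hchoosepos2.ne'
          (by omega), hid]
      have hvk : padicValNat p k < sInf S := by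
        by_contra h
        push_neg at h
        have : p ^ sInf S ≤ p ^ padicValNat p k :=
          Nat.pow_le_pow_right hp.pos h
        have h2 : p ^ padicValNat p k ≤ k :=
          Nat.le_of_dvd (by omega) pow_padicValNat_dvd
        omega
      have : 1 ≤ padicValNat p (a.choose k) := by omega
      exact dvd_trans (dvd_pow_self p (by omega : padicValNat p (a.choose k) ≠ 0))
        pow_padicValNat_dvd
    · push_neg at hka
      rw [Nat.choose_eq_zero_of_lt hka]
      exact dvd_zero p
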